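/- If I ≤_KB J and [ω]^ω is J-inaccessible, then [ω]^ω is I-inaccessible. Equivalently: if there is a ⊆-increasing sequence (B_α)_{α<κ} of subsets of [ω]^ω covering [ω]^ω with each B_α ⊆ Â_α for some A_α ∈ I (where Â = {X ∈ [ω]^ω : |X ∩ A| = ω}), then there is such a covering for J. -/

import Mathlib

open Set Cardinal

/-- `I` is a (proper) ideal on ω containing all finite sets. -/
def IsIdealOmega (I : Set (Set ℕ)) : Prop :=
  (∀ A ∈ I, ∀ B ⊆ A, B ∈ I) ∧ (∀ A ∈ I, ∀ B ∈ I, A ∪ B ∈ I) ∧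
    (∀ A : Set ℕ, A.Finite → A ∈ I) ∧ Set.univ ∉ I

/-- `I` is tall. -/
def IsTall (I : Set (Set ℕ)) : Prop :=
  ∀ X : Set ℕ, X.Infinite → ∃ A ∈ I, A ⊆ X ∧ A.Infinite

lemma image_infinite_of_fin_to_one (f : ℕ → ℕ) (hf : ∀ n : ℕ, (f ⁻¹' {n}).Finite)
    {X : Set ℕ} (hX : X.Infinite) : (f '' X).Infinite := by
  intro hfin
  apply hX
  have : X ⊆ ⋃ n ∈ f '' X, f ⁻¹' {n} := by
    intro x hx
    simp only [mem_iUnion, mem_preimage, mem_singleton_iff]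
    exact ⟨f x, ⟨x, hx, rfl⟩, rfl⟩
  exact Set.Finite.subset (Set.Finite.biUnion hfin fun n _ => hf n) this

lemma pull_infinite (f : ℕ → ℕ) {X A : Set ℕ} (h : (f '' X ∩ A).Infinite) :
    (X ∩ f ⁻¹' A).Infinite := by
  intro hfin
  apply h
  have hsub : f '' X ∩ A ⊆ f '' (X ∩ f ⁻¹' A) := by
    rintro n ⟨⟨x, hx, rfl⟩, hn⟩
    exact ⟨x, ⟨hx, hn⟩, rfl⟩
  exact Set.Finite.subset (hfin.image f) hsub

theorem stmt15 (I J : Set (Set ℕ))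
    (hI : IsIdealOmega I) (hItall : IsTall I)
    (hJ : IsIdealOmega J) (hJtall : IsTall J)
    (f : ℕ → ℕ) (hf : ∀ n : ℕ, (f ⁻¹' {n}).Finite)
    (hred : ∀ A ∈ I, f ⁻¹' A ∈ J)
    -- an increasing covering of [ω]^ω witnessing I-accessibility
    (o : Ordinal) (B : Ordinal → Set (Set ℕ)) (A : Ordinal → Set ℕ)
    (hA : ∀ α < o, A α ∈ I)
    (hmono : ∀ β α, β ≤ α → α < o → B β ⊆ B α)
    (hBsub : ∀ α < o, B α ⊆ {X : Set ℕ | X.Infinite ∧ (X ∩ A α).Infinite})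
    (hcov : ∀ X : Set ℕ, X.Infinite → ∃ α < o, X ∈ B α) :
    -- then there is such a covering for J
    ∃ (o' : Ordinal) (C : Ordinal → Set (Set ℕ)) (D : Ordinal → Set ℕ),
      (∀ α < o', D α ∈ J) ∧
      (∀ β α, β ≤ α → α < o' → C β ⊆ C α) ∧
      (∀ α < o', C α ⊆ {X : Set ℕ | X.Infinite ∧ (X ∩ D α).Infinite}) ∧
      (∀ X : Set ℕ, X.Infinite → ∃ α < o', X ∈ C α) := by
  classical
  -- the chain of values of B, as a type in universe 0
  let P : Set (Set (Set ℕ)) := {S | ∃ α, α < o ∧ B α = S}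
  have hPne : P.Nonempty := by
    obtain ⟨α, hα, -⟩ := hcov Set.univ Set.infinite_univ
    exact ⟨B α, α, hα, rfl⟩
  let idx : P → Ordinal := fun S => S.2.choose
  have hidx : ∀ S : P, idx S < o ∧ B (idx S) = S.val := fun S => S.2.choose_spec
  have idx_inj : Function.Injective idx := by
    intro S T h
    apply Subtype.ext
    rw [← (hidx S).2, ← (hidx T).2, h]
  let r : P → P → Prop := fun S T => idx S < idx T
  have hwo : IsWellOrder P r :=
    (RelEmbedding.preimage ⟨idx, idx_inj⟩ ((· < ·) : Ordinal → Ordinal → Prop)).isWellOrder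
  -- inclusion between members of the chain
  have hincl : ∀ S T : P, idx S ≤ idx T → S.val ⊆ T.val := by
    intro S T h
    rw [← (hidx S).2, ← (hidx T).2]
    exact hmono _ _ h (hidx T).1
  let o₀ : Ordinal.{0} := @Ordinal.type P r hwo
  refine ⟨Ordinal.lift.{_, 0} o₀, ?_⟩
  -- selector
  let Sel : Ordinal → P := fun α =>
    if h : ∃ β, β < o₀ ∧ Ordinal.lift.{_, 0} β = α then
      @Ordinal.enum P r hwo ⟨h.choose, h.choose_spec.1⟩
    else Classical.choice hPne.to_subtype
  refine ⟨fun α => {X | X.Infinite ∧ f '' X ∈ (Sel α).val},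
    fun α => f ⁻¹' (A (idx (Sel α))), ?_, ?_, ?_, ?_⟩
  · intro α _
    exact hred _ (hA _ (hidx (Sel α)).1)
  · intro β α hβα hα X hX
    refine ⟨hX.1, ?_⟩
    have hβ : β < Ordinal.lift.{_, 0} o₀ := lt_of_le_of_lt hβα hα
    obtain ⟨bβ, hbβ, hlβ⟩ := Ordinal.lt_lift_iff.mp hβ
    obtain ⟨bα, hbα, hlα⟩ := Ordinal.lt_lift_iff.mp hα
    have hexβ : ∃ b, b < o₀ ∧ Ordinal.lift.{_, 0} b = β := ⟨bβ, hbβ, hlβ⟩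
    have hexα : ∃ b, b < o₀ ∧ Ordinal.lift.{_, 0} b = α := ⟨bα, hbα, hlα⟩
    have hle : hexβ.choose ≤ hexα.choose := by
      rw [← Ordinal.lift_le.{_, 0}]
      rw [hexβ.choose_spec.2, hexα.choose_spec.2]
      exact hβα
    have hSβ : Sel β = @Ordinal.enum P r hwo ⟨hexβ.choose, hexβ.choose_spec.1⟩ := dif_pos hexβ
    have hSα : Sel α = @Ordinal.enum P r hwo ⟨hexα.choose, hexα.choose_spec.1⟩ := dif_pos hexα
    have hr : idx (Sel β) ≤ idx (Sel α) := by
      rcases eq_or_lt_of_le hle with heq | hlt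
      · have : Sel β = Sel α := by
          rw [hSβ, hSα]
          congr 1
          exact Subtype.ext heq
        rw [this]
      · have : r (Sel β) (Sel α) := by
          rw [hSβ, hSα]
          exact (@Ordinal.enum_lt_enum P r hwo ⟨hexβ.choose, _⟩ ⟨hexα.choose, _⟩).mpr
            (Subtype.mk_lt_mk.mpr hlt)
        exact le_of_lt this
    exact hincl _ _ hr hX.2
  · intro α _ X hX
    refine ⟨hX.1, ?_⟩
    have hmem : f '' X ∈ B (idx (Sel α)) := by rw [(hidx (Sel α)).2]; exact hX.2
    exact pull_infinite f (hBsub _ (hidx (Sel α)).1 hmem).2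
  · intro X hX
    obtain ⟨α, hα, hB⟩ := hcov (f '' X) (image_infinite_of_fin_to_one f hf hX)
    set S : P := ⟨B α, α, hα, rfl⟩ with hS
    have hto : @Ordinal.typein P r hwo S < o₀ := @Ordinal.typein_lt_type P r hwo S
    refine ⟨Ordinal.lift.{_, 0} (@Ordinal.typein P r hwo S), Ordinal.lift_lt.mpr hto, hX, ?_⟩
    have hex : ∃ b, b < o₀ ∧ Ordinal.lift.{_, 0} b = Ordinal.lift.{_, 0}
        (@Ordinal.typein P r hwo S) := ⟨_, hto, rfl⟩
    have hchoose : hex.choose = @Ordinal.typein P r hwo S :=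
      Ordinal.lift_inj.mp hex.choose_spec.2
    have : Sel (Ordinal.lift.{_, 0} (@Ordinal.typein P r hwo S)) = S := by
      show dite _ _ _ = S
      rw [dif_pos hex]
      have : (⟨hex.choose, hex.choose_spec.1⟩ : {b // b < o₀}) =
          ⟨@Ordinal.typein P r hwo S, hto⟩ := Subtype.ext hchoose
      exact (congrArg (@Ordinal.enum P r hwo) this).trans (@Ordinal.enum_typein P r hwo S)
    rw [this]
    exact hB
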